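/- Let p ≥ 2 be an even integer and c ≥ 0 a real number. The sequence of iterates of Q_{p,c}(x) = x^p + c starting at 0 is bounded if and only if Q_{p,c} has a fixed point a ≥ 0. -/

import Mathlib

theorem stmt_2 (p : ℕ) (hp : 2 ≤ p) (hpe : Even p) (c : ℝ) (hc : 0 ≤ c) :
    (∃ M : ℝ, ∀ n : ℕ, 1 ≤ n → |(fun x : ℝ => x ^ p + c)^[n] 0| ≤ M) ↔
      ∃ a : ℝ, 0 ≤ a ∧ a ^ p + c = a := by
  set f : ℝ → ℝ := fun x => x ^ p + c with hf
  set x : ℕ → ℝ := fun n => f^[n] 0 with hx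
  have hstep : ∀ n, x (n+1) = (x n) ^ p + c := by
    intro n
    simp [hx, Function.iterate_succ_apply', hf]
  have hnonneg : ∀ n, 0 ≤ x n := by
    intro n
    cases n with
    | zero => simp [hx]
    | succ n => rw [hstep]; exact add_nonneg (hpe.pow_nonneg _) hc
  have hmono : Monotone x := by
    apply monotone_nat_of_le_succ
    intro n
    induction n with
    | zero => rw [hstep]; simpa [hx] using add_nonneg (hpe.pow_nonneg (0:ℝ)) hc
    | succ n ih =>
      rw [hstep, hstep]
      exact add_le_add_left (pow_le_pow_left₀ (hnonneg n) ih p) c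
  constructor
  · rintro ⟨M, hM⟩
    have hbdd : BddAbove (Set.range x) := by
      refine ⟨max M 0, ?_⟩
      rintro _ ⟨n, rfl⟩
      cases n with
      | zero => simp [hx]
      | succ n =>
        exact le_max_of_le_left ((le_abs_self _).trans (hM (n+1) (Nat.succ_le_succ (Nat.zero_le n))))
    have hlim : Filter.Tendsto x Filter.atTop (nhds (⨆ n, x n)) :=
      tendsto_atTop_ciSup hmono hbdd
    set L := ⨆ n, x n with hL
    have hlim' : Filter.Tendsto (fun n => x (n+1)) Filter.atTop (nhds L) :=
      hlim.comp (Filter.tendsto_add_atTop_nat 1)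
    have hlim'' : Filter.Tendsto (fun n => (x n) ^ p + c) Filter.atTop (nhds (L ^ p + c)) :=
      (hlim.pow p).add tendsto_const_nhds
    have hfix : L ^ p + c = L := by
      apply tendsto_nhds_unique _ hlim'
      simpa [hstep] using hlim''
    exact ⟨L, (hnonneg 0).trans (le_ciSup hbdd 0), hfix⟩
  · rintro ⟨a, ha0, ha⟩
    have hle : ∀ n, x n ≤ a := by
      intro n
      induction n with
      | zero => simpa [hx] using ha0
      | succ n ih =>
        rw [hstep, ← ha]
        exact add_le_add_left (pow_le_pow_left₀ (hnonneg n) ih p) c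
    exact ⟨a, fun n _ => by rw [abs_of_nonneg (hnonneg n)]; exact hle n⟩
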